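/- Let A ⋊_α^σ G be a category crossed product such that each A_e is commutative, every morphism of G is an endomorphism (G is a disjoint union of monoids G_e), each G_e is abelian, and α is symmetric. Then the commutant of A in A ⋊_α^σ G is itself a commutative subring; hence it is the unique maximal commutative subalgebra of A ⋊_α^σ G containing A. -/
import Mathlib


open CategoryTheory

/-- The type of morphisms of a category `G`, bundled with domain and codomain. -/
abbrev CMor (G : Type*) [Category G] := Σ e f : G, e ⟶ f

/-- Transport along an equality of objects, as a ring homomorphism. -/
def castRH {G : Type*} (A : G → Type*) [∀ e, Ring (A e)]
    {e f : G} (h : e = f) : A e →+* A f := by subst h; exact RingHom.id _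

/-- The carrier of the category crossed product `A ⋊_α^σ G`: finitely supported
formal sums `Σ_s a_s u_s` with `a_s ∈ A_{c(s)}`. -/
abbrev CP {G : Type*} [Category G] (A : G → Type*) [∀ e, Ring (A e)] :=
  Π₀ p : CMor G, A p.2.1

open Classical in
/-- The multiplication of the category crossed product:
`(a u_s)(b u_t) = a σ_s(b) α(s,t) u_{st}` when `d(s) = c(t)`, else `0`. -/
noncomputable def catMul {G : Type*} [Category G] {A : G → Type*} [∀ e, Ring (A e)]
    (σ : ∀ e f : G, (e ⟶ f) → (A e →+* A f))
    (α : ∀ e f g : G, (f ⟶ g) → (e ⟶ f) → A g)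
    (x y : CP A) : CP A :=
  x.sum fun p a => y.sum fun q b =>
    if h : q.2.1 = p.1 then
      DFinsupp.single (⟨q.1, p.2.1, (q.2.2 ≫ eqToHom h) ≫ p.2.2⟩ : CMor G)
        (a * σ p.1 p.2.1 p.2.2 (castRH A h b) * α q.1 p.1 p.2.1 p.2.2 (q.2.2 ≫ eqToHom h))
    else 0

open Classical in
/-- `a u_s`, the formal sum supported on a single morphism. -/
noncomputable def catSingle {G : Type*} [Category G] {A : G → Type*} [∀ e, Ring (A e)]
    (p : CMor G) (a : A p.2.1) : CP A := DFinsupp.single p a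


@[simp] lemma castRH_rfl {G : Type*} (A : G → Type*) [∀ e, Ring (A e)] {e : G} :
    castRH A (rfl : e = e) = RingHom.id (A e) := rfl

open Classical in
lemma csingle_congr {G : Type*} [Category G] {A : G → Type*} [∀ e, Ring (A e)]
    {e : G} {m m' : e ⟶ e} (h : m = m') (a : A e) :
    (DFinsupp.single (⟨e, e, m⟩ : CMor G) a : CP A)
      = (DFinsupp.single (⟨e, e, m'⟩ : CMor G) a : CP A) := by
  rw [h]

open Classical in
noncomputable def Fmul {G : Type*} [Category G] {A : G → Type*} [∀ e, Ring (A e)]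
    (σ : ∀ e f : G, (e ⟶ f) → (A e →+* A f))
    (α : ∀ e f g : G, (f ⟶ g) → (e ⟶ f) → A g)
    (p q : CMor G) (a : A p.2.1) (b : A q.2.1) : CP A :=
  if h : q.2.1 = p.1 then
    DFinsupp.single (⟨q.1, p.2.1, (q.2.2 ≫ eqToHom h) ≫ p.2.2⟩ : CMor G)
      (a * σ p.1 p.2.1 p.2.2 (castRH A h b) * α q.1 p.1 p.2.1 p.2.2 (q.2.2 ≫ eqToHom h))
  else 0

open Classical in
theorem catMul_eq {G : Type*} [Category G] {A : G → Type*} [∀ e, Ring (A e)]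
    (σ : ∀ e f : G, (e ⟶ f) → (A e →+* A f))
    (α : ∀ e f g : G, (f ⟶ g) → (e ⟶ f) → A g)
    (x y : CP A) :
    catMul σ α x y = x.sum fun p a => y.sum fun q b => Fmul σ α p q a b := rfl

theorem Fmul_zero_left {G : Type*} [Category G] {A : G → Type*} [∀ e, Ring (A e)]
    (σ : ∀ e f : G, (e ⟶ f) → (A e →+* A f))
    (α : ∀ e f g : G, (f ⟶ g) → (e ⟶ f) → A g)
    (p q : CMor G) (b : A q.2.1) : Fmul σ α p q 0 b = 0 := by
  unfold Fmul; split <;> simp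

theorem Fmul_zero_right {G : Type*} [Category G] {A : G → Type*} [∀ e, Ring (A e)]
    (σ : ∀ e f : G, (e ⟶ f) → (A e →+* A f))
    (α : ∀ e f g : G, (f ⟶ g) → (e ⟶ f) → A g)
    (p q : CMor G) (a : A p.2.1) : Fmul σ α p q a 0 = 0 := by
  unfold Fmul; split <;> simp

open Classical in
theorem eval_right {G : Type*} [Category G] {A : G → Type*} [∀ e, Ring (A e)]
    (σ : ∀ e f : G, (e ⟶ f) → (A e →+* A f))
    (α : ∀ e f g : G, (f ⟶ g) → (e ⟶ f) → A g)
    (hα1r : ∀ (e f : G) (s : e ⟶ f), α e e f s (𝟙 e) = 1)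
    (hendo : ∀ (e f : G), (e ⟶ f) → e = f)
    (x : CP A) (e : G) (s : e ⟶ e) (a : A e) :
    (catMul σ α x (catSingle (A := A) ⟨e, e, 𝟙 e⟩ a)) ⟨e, e, s⟩
      = x ⟨e, e, s⟩ * σ e e s a := by
  rw [catMul_eq]
  have h1 : (x.sum fun p c => (catSingle (A := A) ⟨e, e, 𝟙 e⟩ a).sum
      fun q b => Fmul σ α p q c b) = x.sum fun p c => Fmul σ α p ⟨e, e, 𝟙 e⟩ c a := by
    unfold DFinsupp.sum
    refine Finset.sum_congr rfl fun p _ => ?_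
    exact DFinsupp.sum_single_index (Fmul_zero_right σ α p _ _)
  rw [h1, DFinsupp.sum_apply, DFinsupp.sum]
  rw [Finset.sum_eq_single (⟨e, e, s⟩ : CMor G)]
  · simp only [Fmul]
    first | rw [dif_pos trivial] | rw [dif_pos rfl]
    simp only [eqToHom_refl, Category.comp_id, Category.id_comp, castRH_rfl,
      RingHom.id_apply, hα1r, mul_one]
    rw [csingle_congr (show (𝟙 e ≫ 𝟙 e) ≫ s = s by simp), DFinsupp.single_eq_same]
  · rintro ⟨e1, e2, t⟩ hp hne
    have he : e1 = e2 := hendo e1 e2 t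
    subst he
    by_cases h : e = e1
    · subst h
      simp only [Fmul]
      first | rw [dif_pos trivial] | rw [dif_pos rfl]
      simp only [eqToHom_refl, Category.comp_id, Category.id_comp, castRH_rfl,
        RingHom.id_apply]
      rw [csingle_congr (show (𝟙 e ≫ 𝟙 e) ≫ t = t by simp),
        DFinsupp.single_apply, dif_neg]
      intro hc
      exact hne hc
    · simp [Fmul, h]
  · intro hr
    rw [DFinsupp.notMem_support_iff] at hr
    simp [hr, Fmul_zero_left]

open Classical in
theorem eval_left {G : Type*} [Category G] {A : G → Type*} [∀ e, Ring (A e)]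
    (σ : ∀ e f : G, (e ⟶ f) → (A e →+* A f))
    (α : ∀ e f g : G, (f ⟶ g) → (e ⟶ f) → A g)
    (hσ1 : ∀ e : G, σ e e (𝟙 e) = RingHom.id (A e))
    (hα1l : ∀ (e f : G) (s : e ⟶ f), α e f f (𝟙 f) s = 1)
    (hendo : ∀ (e f : G), (e ⟶ f) → e = f)
    (x : CP A) (e : G) (s : e ⟶ e) (a : A e) :
    (catMul σ α (catSingle (A := A) ⟨e, e, 𝟙 e⟩ a) x) ⟨e, e, s⟩
      = a * x ⟨e, e, s⟩ := by
  rw [catMul_eq]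
  have h1 : ((catSingle (A := A) ⟨e, e, 𝟙 e⟩ a).sum fun p c => x.sum
      fun q b => Fmul σ α p q c b) = x.sum fun q b => Fmul σ α ⟨e, e, 𝟙 e⟩ q a b := by
    refine DFinsupp.sum_single_index ?_
    simp [DFinsupp.sum, Fmul_zero_left]
  rw [h1, DFinsupp.sum_apply, DFinsupp.sum]
  rw [Finset.sum_eq_single (⟨e, e, s⟩ : CMor G)]
  · simp only [Fmul]
    first | rw [dif_pos trivial] | rw [dif_pos rfl]
    simp only [eqToHom_refl, Category.comp_id, Category.id_comp, castRH_rfl,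
      RingHom.id_apply, hσ1, hα1l, mul_one]
    rw [csingle_congr (show (s ≫ 𝟙 e) ≫ 𝟙 e = s by simp), DFinsupp.single_eq_same]
  · rintro ⟨e1, e2, t⟩ hp hne
    have he : e1 = e2 := hendo e1 e2 t
    subst he
    by_cases h : e1 = e
    · subst h
      simp only [Fmul]
      first | rw [dif_pos trivial] | rw [dif_pos rfl]
      simp only [eqToHom_refl, Category.comp_id, Category.id_comp, castRH_rfl,
        RingHom.id_apply]
      rw [csingle_congr (show (t ≫ 𝟙 e1) ≫ 𝟙 e1 = t by simp),
        DFinsupp.single_apply, dif_neg]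
      intro hc
      exact hne hc
    · simp [Fmul, h]
  · intro hr
    rw [DFinsupp.notMem_support_iff] at hr
    simp [hr, Fmul_zero_right]


/-- if each `A_e` is commutative, every morphism of `G` is an
endomorphism, each `G_e` is abelian and `α` is symmetric, then the commutant
of `A` in `A ⋊_α^σ G` is commutative; hence it is the unique maximal
commutative subalgebra of `A ⋊_α^σ G` containing `A`. -/
theorem commutant_is_commutative
    {G : Type*} [CategoryTheory.Category G] {A : G → Type*} [∀ e, CommRing (A e)]
    (σ : ∀ e f : G, (e ⟶ f) → (A e →+* A f))
    (α : ∀ e f g : G, (f ⟶ g) → (e ⟶ f) → A g)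
    (hσ1 : ∀ e : G, σ e e (𝟙 e) = RingHom.id (A e))
    (hα1r : ∀ (e f : G) (s : e ⟶ f), α e e f s (𝟙 e) = 1)
    (hα1l : ∀ (e f : G) (s : e ⟶ f), α e f f (𝟙 f) s = 1)
    (hcoc : ∀ (e f g h : G) (s : g ⟶ h) (t : f ⟶ g) (r : e ⟶ f),
      α f g h s t * α e f h (t ≫ s) r = σ g h s (α e f g t r) * α e g h s (r ≫ t))
    (htw : ∀ (e f g : G) (s : f ⟶ g) (t : e ⟶ f) (a : A e),
      σ f g s (σ e f t a) * α e f g s t = α e f g s t * σ e g (t ≫ s) a)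
    (hendo : ∀ (e f : G), (e ⟶ f) → e = f)
    (habel : ∀ (e : G) (s t : e ⟶ e), s ≫ t = t ≫ s)
    (hsym : ∀ (e : G) (s t : e ⟶ e), α e e e s t = α e e e t s) :
    ∀ x y : CP A,
      (∀ (e : G) (a : A e),
        catMul σ α x (catSingle (A := A) ⟨e, e, 𝟙 e⟩ a)
          = catMul σ α (catSingle (A := A) ⟨e, e, 𝟙 e⟩ a) x) →
      (∀ (e : G) (a : A e),
        catMul σ α y (catSingle (A := A) ⟨e, e, 𝟙 e⟩ a)
          = catMul σ α (catSingle (A := A) ⟨e, e, 𝟙 e⟩ a) y) →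
      catMul σ α x y = catMul σ α y x := by
    classical
  intro x y hx hy
  have hx' : ∀ (e : G) (s : e ⟶ e) (a : A e),
      x ⟨e, e, s⟩ * σ e e s a = a * x ⟨e, e, s⟩ := by
    intro e s a
    have := congrFun (congrArg DFunLike.coe (hx e a)) ⟨e, e, s⟩
    rwa [eval_right σ α hα1r hendo, eval_left σ α hσ1 hα1l hendo] at this
  have hy' : ∀ (e : G) (s : e ⟶ e) (a : A e),
      y ⟨e, e, s⟩ * σ e e s a = a * y ⟨e, e, s⟩ := by
    intro e s a
    have := congrFun (congrArg DFunLike.coe (hy e a)) ⟨e, e, s⟩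
    rwa [eval_right σ α hα1r hendo, eval_left σ α hσ1 hα1l hendo] at this
  rw [catMul_eq, catMul_eq]
  conv_rhs => rw [DFinsupp.sum_comm]
  unfold DFinsupp.sum
  refine Finset.sum_congr rfl fun p _ => Finset.sum_congr rfl fun q _ => ?_
  -- goal: Fmul σ α p q (x p) (y q) = Fmul σ α q p (y q) (x p)
  obtain ⟨e1, e2, s⟩ := p
  have he : e1 = e2 := hendo e1 e2 s
  subst he
  obtain ⟨f1, f2, t⟩ := q
  have hf : f1 = f2 := hendo f1 f2 t
  subst hf
  by_cases h : f1 = e1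
  · subst h
    simp only [Fmul]
    first | rw [dif_pos trivial, dif_pos trivial] | rw [dif_pos rfl, dif_pos rfl]
    simp only [eqToHom_refl, Category.comp_id, Category.id_comp, castRH_rfl,
      RingHom.id_apply]
    rw [csingle_congr (show (t ≫ 𝟙 f1) ≫ s = s ≫ t by
        rw [Category.comp_id]; exact habel f1 t s),
      csingle_congr (show (s ≫ 𝟙 f1) ≫ t = s ≫ t by simp)]
    rw [hsym f1 t s, hx' f1 s (y ⟨f1, f1, t⟩), hy' f1 t (x ⟨f1, f1, s⟩)]
    congr 1
    ring
  · simp [Fmul, h, Ne.symm h]
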